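/- For every integer p ≥ 2, the series Σ_{n≥0} C_n^{(p)} · R_p^n (evaluated at the radius of convergence R_p = (p−1)^{p−1}/p^p) converges and its sum equals p/(p−1). -/

import Mathlib

/-- The (real) Fuss–Catalan numbers of order `p`: `C_n^{(p)} = binom(pn, n) / ((p-1)n + 1)`. -/
noncomputable def fussCatalanReal (p n : ℕ) : ℝ :=
  ((p * n).choose n : ℝ) / (((p - 1) * n + 1 : ℕ) : ℝ)

/-- `R_p = (p-1)^(p-1) / p^p`. -/
noncomputable def Rp (p : ℕ) : ℝ :=
  ((p - 1 : ℕ) : ℝ) ^ (p - 1) / (p : ℝ) ^ p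

/-- Ballot-type numbers `b(j,n) = C(pn+j-1, n) - (p-1) C(pn+j-1, n-1)`. -/
noncomputable def fcB (p j : ℕ) : ℕ → ℝ
  | 0 => 1
  | (n+1) => ((p * (n+1) + j - 1).choose (n+1) : ℝ)
      - ((p - 1 : ℕ) : ℝ) * ((p * (n+1) + j - 1).choose n : ℝ)

lemma fcB_hm {p : ℕ} (hp : 2 ≤ p) (n : ℕ) : p * (n+1) = (p - 1) * (n+1) + (n+1) := by
  obtain ⟨q, rfl⟩ : ∃ q, p = q + 1 := ⟨p - 1, by omega⟩
  simp only [Nat.add_sub_cancel]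
  ring

lemma fcB_zero_succ {p : ℕ} (hp : 2 ≤ p) (n : ℕ) : fcB p 0 (n+1) = 0 := by
  have hm := fcB_hm hp n
  have h2 : p * (n+1) + 0 - 1 - n = (p-1) * (n+1) := by
    rw [hm]; generalize (p-1) * (n+1) = A; omega
  have key : (p * (n+1) + 0 - 1).choose (n+1) = (p-1) * ((p * (n+1) + 0 - 1).choose n) := by
    have h1 := Nat.choose_succ_right_eq (p * (n+1) + 0 - 1) n
    rw [h2] at h1
    exact Nat.eq_of_mul_eq_mul_right (by omega : 0 < n + 1)
      (by rw [h1]; ring)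
  simp only [fcB, key]
  push_cast
  ring

lemma fcB_one {p : ℕ} (hp : 2 ≤ p) (n : ℕ) : fcB p 1 n = fussCatalanReal p n := by
  cases' n with n
  · simp [fcB, fussCatalanReal]
  · have hm := fcB_hm hp n
    have hidx : p * (n+1) + 1 - 1 = p * (n+1) := by omega
    have h1 := Nat.choose_succ_right_eq (p * (n+1)) n
    have h2 : p * (n+1) - n = (p-1) * (n+1) + 1 := by
      rw [hm]; generalize (p-1) * (n+1) = A; omega
    rw [h2] at h1
    simp only [fcB, fussCatalanReal, hidx]
    have hd : (0:ℝ) < (((p-1) * (n+1) + 1 : ℕ) : ℝ) := by positivity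
    rw [eq_div_iff (ne_of_gt hd)]
    have h1R : ((p * (n+1)).choose (n+1) : ℝ) * ((n:ℝ)+1)
        = ((p * (n+1)).choose n : ℝ) * (((p-1) * (n+1) + 1 : ℕ) : ℝ) := by
      exact_mod_cast congrArg (fun x : ℕ => (x : ℝ)) h1
    have hdc : (((p-1) * (n+1) + 1 : ℕ) : ℝ) = ((p-1 : ℕ) : ℝ) * ((n:ℝ)+1) + 1 := by
      push_cast; ring
    rw [hdc] at h1R ⊢
    linear_combination ((p-1:ℕ):ℝ) * h1R

lemma fcB_pascal {p : ℕ} (hp : 2 ≤ p) (j n : ℕ) :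
    fcB p (j+1) (n+1) = fcB p j (n+1) + fcB p (j+p) n := by
  cases' n with m
  · simp only [fcB]
    have h1 : p * (0+1) + (j+1) - 1 = p + j := by omega
    have h2 : p * (0+1) + j - 1 = p + j - 1 := by omega
    rw [h1, h2]
    rw [Nat.choose_one_right, Nat.choose_one_right]
    simp only [Nat.choose_zero_right, Nat.cast_one]
    have e1 : ((p + j - 1 : ℕ) : ℝ) = (p : ℝ) + (j : ℝ) - 1 := by
      push_cast [Nat.cast_sub (by omega : (1:ℕ) ≤ p + j)]; ring
    have e2 : ((p - 1 : ℕ) : ℝ) = (p : ℝ) - 1 := by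
      push_cast [Nat.cast_sub (by omega : (1:ℕ) ≤ p)]; ring
    rw [e1, e2]; push_cast; ring
  · have hB : 0 < p * (m+2) := Nat.mul_pos (by omega) (by omega)
    have hM1 : p * (m+2) + (j+1) - 1 = (p * (m+2) + j - 1) + 1 := by
      generalize hG : p * (m+2) = B at hB ⊢; omega
    have hC : p * (m+2) = p * (m+1) + p := by ring
    have hM2 : p * (m+1) + (j+p) - 1 = p * (m+2) + j - 1 := by
      rw [hC]; generalize p * (m+1) = C; omega
    show fcB p (j+1) (m+1+1) = fcB p j (m+1+1) + fcB p (j+p) (m+1)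
    simp only [fcB]
    have hmm : m + 1 + 1 = m + 2 := rfl
    rw [hmm, hM1, hM2]
    rw [Nat.choose_succ_succ (p * (m+2) + j - 1) (m+1), Nat.choose_succ_succ (p * (m+2) + j - 1) m]
    push_cast
    ring

lemma fcB_nonneg {p : ℕ} (hp : 2 ≤ p) : ∀ n j, 0 ≤ fcB p j n := by
  intro n
  induction' n with n ih
  · intro j; simp [fcB]
  · intro j
    induction' j with j ihj
    · rw [fcB_zero_succ hp]
    · rw [fcB_pascal hp]
      exact add_nonneg ihj (ih _)

lemma fcB_apply_zero (p j : ℕ) : fcB p j 0 = 1 := rfl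

lemma fcB_conv {p : ℕ} (hp : 2 ≤ p) :
    ∀ n j, (∑ k ∈ Finset.range (n+1), fcB p j k * fcB p 1 (n-k)) = fcB p (j+1) n := by
  intro n
  induction' n with n ih
  · intro j; simp [fcB]
  · intro j
    induction' j with j ihj
    · rw [Finset.sum_eq_single 0]
      · simp [fcB_apply_zero]
      · intro k hk hk0
        obtain ⟨k', rfl⟩ := Nat.exists_eq_succ_of_ne_zero hk0
        rw [fcB_zero_succ hp, zero_mul]
      · intro h; exact absurd (Finset.mem_range.mpr (Nat.succ_pos _)) h
    · have expand : (∑ k ∈ Finset.range (n+2), fcB p (j+1) k * fcB p 1 (n+1-k))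
          = (∑ k ∈ Finset.range (n+1), fcB p (j+1) (k+1) * fcB p 1 (n-k))
            + fcB p (j+1) 0 * fcB p 1 (n+1) := by
        rw [Finset.sum_range_succ' (fun k => fcB p (j+1) k * fcB p 1 (n+1-k)) (n+1)]
        simp [Nat.succ_sub_succ]
      have reassemble : (∑ k ∈ Finset.range (n+1), fcB p j (k+1) * fcB p 1 (n-k))
            + fcB p j 0 * fcB p 1 (n+1)
          = ∑ k ∈ Finset.range (n+2), fcB p j k * fcB p 1 (n+1-k) := by
        rw [Finset.sum_range_succ' (fun k => fcB p j k * fcB p 1 (n+1-k)) (n+1)]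
        simp [Nat.succ_sub_succ]
      have step : (∑ k ∈ Finset.range (n+1), fcB p (j+1) (k+1) * fcB p 1 (n-k))
          = (∑ k ∈ Finset.range (n+1), fcB p j (k+1) * fcB p 1 (n-k))
            + (∑ k ∈ Finset.range (n+1), fcB p (j+p) k * fcB p 1 (n-k)) := by
        rw [← Finset.sum_add_distrib]
        apply Finset.sum_congr rfl
        intro k _
        rw [fcB_pascal hp]
        ring
      have hj1 : (∑ k ∈ Finset.range (n+1), fcB p j (k+1) * fcB p 1 (n-k))
            + fcB p j 0 * fcB p 1 (n+1) = fcB p (j+1) (n+1) := by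
        rw [reassemble]; exact ihj
      rw [expand, step, ih (j+p)]
      rw [fcB_pascal hp (j+1) n]
      have hz0 : fcB p (j+1) 0 = fcB p j 0 := by rw [fcB_apply_zero, fcB_apply_zero]
      have hcomm : j + 1 + p = j + p + 1 := by omega
      rw [hz0, hcomm]
      linarith [hj1]
lemma triangle_le_prod (f g : ℕ → ℝ) (hf : ∀ n, 0 ≤ f n) (hg : ∀ n, 0 ≤ g n) (N : ℕ) :
    (∑ n ∈ Finset.range N, ∑ k ∈ Finset.range (n+1), f k * g (n-k))
      ≤ (∑ n ∈ Finset.range N, f n) * (∑ n ∈ Finset.range N, g n) := by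
  have key : ∀ N, (∑ n ∈ Finset.range N, ∑ k ∈ Finset.range (n+1), f k * g (n-k))
      = ∑ k ∈ Finset.range N, f k * (∑ m ∈ Finset.range (N-k), g m) := by
    intro N
    induction' N with N ih
    · simp
    · rw [Finset.sum_range_succ, ih]
      conv_rhs => rw [Finset.sum_range_succ]
      have h1 : ∀ k ∈ Finset.range N, f k * (∑ m ∈ Finset.range (N+1-k), g m)
          = f k * (∑ m ∈ Finset.range (N-k), g m) + f k * g (N-k) := by
        intro k hk
        have hkN : k ≤ N := le_of_lt (Finset.mem_range.mp hk)
        have hstep : N + 1 - k = (N - k) + 1 := by omega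
        rw [hstep, Finset.sum_range_succ]
        ring
      rw [Finset.sum_congr rfl h1, Finset.sum_add_distrib]
      rw [Finset.sum_range_succ (fun k => f k * g (N - k)) N]
      have hNN : N + 1 - N = 1 := by omega
      have hNN0 : N - N = 0 := by omega
      rw [hNN, hNN0, Finset.sum_range_one]
      ring
  rw [key, Finset.sum_mul]
  apply Finset.sum_le_sum
  intro k hk
  apply mul_le_mul_of_nonneg_left _ (hf k)
  apply Finset.sum_le_sum_of_subset_of_nonneg
  · apply Finset.range_subset_range.mpr; omega
  · intro m _ _; exact hg m

section Main

variable {p : ℕ} (hp : 2 ≤ p)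

lemma Rp_nonneg (p : ℕ) : 0 ≤ Rp p := by
  unfold Rp; positivity

/-- partial sums of `fcB j · R^·`. -/
noncomputable def fcA (p j N : ℕ) : ℝ := ∑ n ∈ Finset.range N, fcB p j n * Rp p ^ n

lemma fcA_nonneg (hp : 2 ≤ p) (j N : ℕ) : 0 ≤ fcA p j N := by
  apply Finset.sum_nonneg
  intro n _
  exact mul_nonneg (fcB_nonneg hp n j) (pow_nonneg (Rp_nonneg p) n)

lemma fcA_succ_le (hp : 2 ≤ p) (j N : ℕ) : fcA p (j+1) N ≤ fcA p j N * fcA p 1 N := by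
  have hterm : ∀ n, fcB p (j+1) n * Rp p ^ n
      = ∑ k ∈ Finset.range (n+1), (fcB p j k * Rp p ^ k) * (fcB p 1 (n-k) * Rp p ^ (n-k)) := by
    intro n
    rw [← fcB_conv hp n j, Finset.sum_mul]
    apply Finset.sum_congr rfl
    intro k hk
    have hkn : k ≤ n := Nat.lt_succ_iff.mp (Finset.mem_range.mp hk)
    have : Rp p ^ k * Rp p ^ (n - k) = Rp p ^ n := by
      rw [← pow_add]; congr 1; omega
    calc fcB p j k * fcB p 1 (n - k) * Rp p ^ n
        = fcB p j k * fcB p 1 (n - k) * (Rp p ^ k * Rp p ^ (n-k)) := by rw [this]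
      _ = fcB p j k * Rp p ^ k * (fcB p 1 (n - k) * Rp p ^ (n - k)) := by ring
  unfold fcA
  calc (∑ n ∈ Finset.range N, fcB p (j+1) n * Rp p ^ n)
      = ∑ n ∈ Finset.range N, ∑ k ∈ Finset.range (n+1),
          (fcB p j k * Rp p ^ k) * (fcB p 1 (n-k) * Rp p ^ (n-k)) :=
        Finset.sum_congr rfl (fun n _ => hterm n)
    _ ≤ _ := triangle_le_prod _ _
        (fun n => mul_nonneg (fcB_nonneg hp n j) (pow_nonneg (Rp_nonneg p) n))
        (fun n => mul_nonneg (fcB_nonneg hp n 1) (pow_nonneg (Rp_nonneg p) n)) N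

lemma fcA_le_pow (hp : 2 ≤ p) (j N : ℕ) : fcA p (j+1) N ≤ fcA p 1 N ^ (j+1) := by
  induction' j with j ih
  · simp [pow_one]
  · calc fcA p (j+2) N ≤ fcA p (j+1) N * fcA p 1 N := fcA_succ_le hp (j+1) N
      _ ≤ fcA p 1 N ^ (j+1) * fcA p 1 N :=
          mul_le_mul_of_nonneg_right ih (fcA_nonneg hp 1 N)
      _ = fcA p 1 N ^ (j+2) := by ring

lemma cast_p_sub_one (hp : 2 ≤ p) : ((p - 1 : ℕ) : ℝ) = (p : ℝ) - 1 := by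
  push_cast [Nat.cast_sub (by omega : (1:ℕ) ≤ p)]; ring

lemma q_sub_one_pos (hp : 2 ≤ p) : (0:ℝ) < (p : ℝ) - 1 := by
  have : (2:ℝ) ≤ (p:ℝ) := by exact_mod_cast hp
  linarith

/-- the critical value `c = p/(p-1)`. -/
lemma Rp_c_pow (hp : 2 ≤ p) :
    Rp p * ((p:ℝ) / ((p:ℝ) - 1)) ^ p = 1 / ((p:ℝ) - 1) := by
  have h1 : (0:ℝ) < (p:ℝ) - 1 := q_sub_one_pos hp
  have hq : (0:ℝ) < (p:ℝ) := by linarith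
  have hps : p - 1 + 1 = p := by omega
  have hpow : ((p:ℝ) - 1) ^ p = ((p:ℝ) - 1) ^ (p-1) * ((p:ℝ) - 1) := by
    rw [← pow_succ, hps]
  unfold Rp
  rw [cast_p_sub_one hp, div_pow, hpow]
  field_simp
  try ring

lemma Rp_pc_pow (hp : 2 ≤ p) :
    Rp p * ((p:ℝ) * ((p:ℝ) / ((p:ℝ) - 1)) ^ (p-1)) = 1 := by
  have h1 : (0:ℝ) < (p:ℝ) - 1 := q_sub_one_pos hp
  have hq : (0:ℝ) < (p:ℝ) := by linarith
  have hps : p - 1 + 1 = p := by omega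
  have hpow : (p:ℝ) ^ p = (p:ℝ) ^ (p-1) * (p:ℝ) := by
    rw [← pow_succ, hps]
  unfold Rp
  rw [cast_p_sub_one hp, div_pow, hpow]
  field_simp
  try ring

lemma one_add_Rc (hp : 2 ≤ p) :
    1 + Rp p * ((p:ℝ) / ((p:ℝ) - 1)) ^ p = (p:ℝ) / ((p:ℝ) - 1) := by
  rw [Rp_c_pow hp]
  have h1 : (0:ℝ) < (p:ℝ) - 1 := q_sub_one_pos hp
  field_simp
  ring

lemma fcB_one_succ (hp : 2 ≤ p) (n : ℕ) : fcB p 1 (n+1) = fcB p p n := by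
  have := fcB_pascal hp 0 n
  rw [fcB_zero_succ hp n] at this
  simpa using this

lemma fcA_one_succ (hp : 2 ≤ p) (N : ℕ) :
    fcA p 1 (N+1) = 1 + Rp p * fcA p p N := by
  unfold fcA
  rw [Finset.sum_range_succ' (fun n => fcB p 1 n * Rp p ^ n) N]
  have : ∀ n, fcB p 1 (n+1) * Rp p ^ (n+1) = Rp p * (fcB p p n * Rp p ^ n) := by
    intro n
    rw [fcB_one_succ hp, pow_succ]
    ring
  rw [Finset.sum_congr rfl (fun n _ => this n), ← Finset.mul_sum]
  simp [fcB_apply_zero]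
  ring

lemma fcA_one_le (hp : 2 ≤ p) (N : ℕ) : fcA p 1 N ≤ (p:ℝ) / ((p:ℝ) - 1) := by
  have h1 : (0:ℝ) < (p:ℝ) - 1 := q_sub_one_pos hp
  have hq : (0:ℝ) < (p:ℝ) := by linarith
  have hc : (0:ℝ) ≤ (p:ℝ) / ((p:ℝ) - 1) := by positivity
  induction' N with N ih
  · simpa [fcA] using hc
  · rw [fcA_one_succ hp]
    have hAp : fcA p p N ≤ fcA p 1 N ^ p := by
      have := fcA_le_pow hp (p-1) N
      have hps : p - 1 + 1 = p := by omega
      rwa [hps] at this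
    have hpowle : fcA p 1 N ^ p ≤ ((p:ℝ) / ((p:ℝ) - 1)) ^ p :=
      pow_le_pow_left₀ (fcA_nonneg hp 1 N) ih p
    calc 1 + Rp p * fcA p p N ≤ 1 + Rp p * ((p:ℝ) / ((p:ℝ) - 1)) ^ p := by
          have := Rp_nonneg p
          nlinarith [hAp, hpowle]
      _ = (p:ℝ) / ((p:ℝ) - 1) := one_add_Rc hp

end Main
section Final

variable {p : ℕ}

lemma Rp_pos (hp : 2 ≤ p) : 0 < Rp p := by
  unfold Rp
  apply div_pos
  · apply pow_pos
    have : 1 ≤ p - 1 := by omega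
    exact_mod_cast Nat.lt_of_lt_of_le Nat.zero_lt_one this
  · apply pow_pos
    exact_mod_cast Nat.lt_of_lt_of_le Nat.zero_lt_two hp

lemma fcB_term_conv (hp : 2 ≤ p) (j n : ℕ) :
    fcB p (j+1) n * Rp p ^ n
      = ∑ k ∈ Finset.range (n+1), (fcB p j k * Rp p ^ k) * (fcB p 1 (n-k) * Rp p ^ (n-k)) := by
  rw [← fcB_conv hp n j, Finset.sum_mul]
  apply Finset.sum_congr rfl
  intro k hk
  have hkn : k ≤ n := Nat.lt_succ_iff.mp (Finset.mem_range.mp hk)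
  have hpow : Rp p ^ k * Rp p ^ (n - k) = Rp p ^ n := by
    rw [← pow_add]; congr 1; omega
  calc fcB p j k * fcB p 1 (n - k) * Rp p ^ n
      = fcB p j k * fcB p 1 (n - k) * (Rp p ^ k * Rp p ^ (n-k)) := by rw [hpow]
    _ = fcB p j k * Rp p ^ k * (fcB p 1 (n - k) * Rp p ^ (n - k)) := by ring

lemma f1_summable (hp : 2 ≤ p) : Summable (fun n : ℕ => fcB p 1 n * Rp p ^ n) := by
  apply summable_of_sum_range_le
    (c := (p:ℝ) / ((p:ℝ) - 1))
    (fun n => mul_nonneg (fcB_nonneg hp n 1) (pow_nonneg (Rp_nonneg p) n))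
  intro N
  exact fcA_one_le hp N

lemma fj_summable_tsum (hp : 2 ≤ p) :
    ∀ j, Summable (fun n : ℕ => fcB p (j+1) n * Rp p ^ n) ∧
      (∑' n : ℕ, fcB p (j+1) n * Rp p ^ n) = (∑' n : ℕ, fcB p 1 n * Rp p ^ n) ^ (j+1) := by
  intro j
  induction' j with j ih
  · exact ⟨f1_summable hp, by rw [pow_one]⟩
  · obtain ⟨hsum, htsum⟩ := ih
    have hnorm : Summable (fun n : ℕ => ‖fcB p (j+1) n * Rp p ^ n‖) :=
      hsum.congr (fun n => (Real.norm_of_nonneg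
        (mul_nonneg (fcB_nonneg hp n (j+1)) (pow_nonneg (Rp_nonneg p) n))).symm)
    have hnorm1 : Summable (fun n : ℕ => ‖fcB p 1 n * Rp p ^ n‖) :=
      (f1_summable hp).congr (fun n => (Real.norm_of_nonneg
        (mul_nonneg (fcB_nonneg hp n 1) (pow_nonneg (Rp_nonneg p) n))).symm)
    have hconv : ∀ n : ℕ, (∑ k ∈ Finset.range (n+1),
          (fcB p (j+1) k * Rp p ^ k) * (fcB p 1 (n-k) * Rp p ^ (n-k)))
        = fcB p (j+2) n * Rp p ^ n := fun n => (fcB_term_conv hp (j+1) n).symm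
    constructor
    · have := (summable_norm_sum_mul_range_of_summable_norm hnorm hnorm1).of_norm
      exact this.congr hconv
    · have := tsum_mul_tsum_eq_tsum_sum_range_of_summable_norm hnorm hnorm1
      rw [htsum] at this
      calc (∑' n : ℕ, fcB p (j+2) n * Rp p ^ n)
          = ∑' n : ℕ, ∑ k ∈ Finset.range (n+1),
              (fcB p (j+1) k * Rp p ^ k) * (fcB p 1 (n-k) * Rp p ^ (n-k)) :=
            tsum_congr (fun n => (hconv n).symm)
        _ = (∑' n : ℕ, fcB p 1 n * Rp p ^ n) ^ (j + 1) * (∑' n : ℕ, fcB p 1 n * Rp p ^ n) :=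
            this.symm
        _ = (∑' n : ℕ, fcB p 1 n * Rp p ^ n) ^ (j + 2) := by ring

lemma S_fixed (hp : 2 ≤ p) :
    (∑' n : ℕ, fcB p 1 n * Rp p ^ n)
      = 1 + Rp p * (∑' n : ℕ, fcB p 1 n * Rp p ^ n) ^ p := by
  have hsum := f1_summable hp
  have h0 : (∑' n : ℕ, fcB p 1 n * Rp p ^ n)
      = fcB p 1 0 * Rp p ^ 0 + ∑' n : ℕ, fcB p 1 (n+1) * Rp p ^ (n+1) :=
    Summable.tsum_eq_zero_add hsum
  have hshift : ∀ n : ℕ, fcB p 1 (n+1) * Rp p ^ (n+1)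
      = Rp p * (fcB p p n * Rp p ^ n) := by
    intro n
    rw [fcB_one_succ hp, pow_succ]
    ring
  have hps : p - 1 + 1 = p := by omega
  obtain ⟨hsump, htsump⟩ := fj_summable_tsum hp (p-1)
  rw [hps] at hsump htsump
  have h2 : (∑' n : ℕ, fcB p 1 (n+1) * Rp p ^ (n+1))
      = Rp p * (∑' n : ℕ, fcB p 1 n * Rp p ^ n) ^ p := by
    rw [tsum_congr hshift, tsum_mul_left, htsump]
  conv_lhs => rw [h0]
  rw [h2]
  simp [fcB_apply_zero]

/-- For every integer `p ≥ 2`, the series `Σ_{n ≥ 0} C_n^{(p)} R_p^n` (evaluated at the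
radius of convergence `R_p`) converges, with sum `p/(p−1)`. -/
theorem fussCatalan_sum_at_radius (p : ℕ) (hp : 2 ≤ p) :
    Summable (fun n : ℕ => fussCatalanReal p n * Rp p ^ n) ∧
    (∑' n : ℕ, fussCatalanReal p n * Rp p ^ n) = (p : ℝ) / ((p : ℝ) - 1) := by
  have hfun : (fun n : ℕ => fussCatalanReal p n * Rp p ^ n)
      = fun n : ℕ => fcB p 1 n * Rp p ^ n :=
    funext fun n => by rw [fcB_one hp]
  rw [hfun]
  refine ⟨f1_summable hp, ?_⟩
  set S := ∑' n : ℕ, fcB p 1 n * Rp p ^ n with hS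
  set c := (p:ℝ) / ((p:ℝ) - 1) with hcdef
  have hS0 : 0 ≤ S := tsum_nonneg
    (fun n => mul_nonneg (fcB_nonneg hp n 1) (pow_nonneg (Rp_nonneg p) n))
  have hSc : S ≤ c := Summable.tsum_le_of_sum_range_le (f1_summable hp)
    (fun N => fcA_one_le hp N)
  have hfix : S = 1 + Rp p * S ^ p := S_fixed hp
  have hcfix : 1 + Rp p * c ^ p = c := one_add_Rc hp
  by_contra hne
  have hlt : S < c := lt_of_le_of_ne hSc hne
  have hcpos : 0 < c := by
    have h1 := q_sub_one_pos hp
    have hq : (0:ℝ) < (p:ℝ) := by linarith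
    positivity
  have hgeom := geom_sum₂_mul c S p
  -- (∑ i ∈ range p, c ^ i * S ^ (p - 1 - i)) * (c - S) = c ^ p - S ^ p
  have hQlt : (∑ i ∈ Finset.range p, c ^ i * S ^ (p - 1 - i)) < (p:ℝ) * c ^ (p-1) := by
    have hsum_const : (∑ _i ∈ Finset.range p, c ^ (p-1)) = (p:ℝ) * c ^ (p-1) := by
      rw [Finset.sum_const, Finset.card_range, nsmul_eq_mul]
    rw [← hsum_const]
    apply Finset.sum_lt_sum
    · intro i hi
      have hip : i ≤ p - 1 := by
        have := Finset.mem_range.mp hi; omega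
      have h1 : S ^ (p-1-i) ≤ c ^ (p-1-i) := pow_le_pow_left₀ hS0 (le_of_lt hlt) _
      calc c ^ i * S ^ (p-1-i) ≤ c ^ i * c ^ (p-1-i) :=
            mul_le_mul_of_nonneg_left h1 (pow_nonneg (le_of_lt hcpos) i)
        _ = c ^ (p-1) := by rw [← pow_add]; congr 1; omega
    · refine ⟨0, Finset.mem_range.mpr (by omega), ?_⟩
      have : S ^ (p-1-0) < c ^ (p-1-0) := by
        apply pow_lt_pow_left₀ hlt hS0
        omega
      calc c ^ 0 * S ^ (p-1-0) = S ^ (p-1-0) := by rw [pow_zero, one_mul]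
        _ < c ^ (p-1-0) := this
        _ = c ^ (p-1) := by norm_num
  have hcS : 0 < c - S := by linarith
  have hRpos := Rp_pos hp
  have hkey : c - S = Rp p * ((∑ i ∈ Finset.range p, c ^ i * S ^ (p - 1 - i)) * (c - S)) := by
    rw [hgeom]
    calc c - S = (1 + Rp p * c ^ p) - (1 + Rp p * S ^ p) := by rw [hcfix, ← hfix]
      _ = Rp p * (c ^ p - S ^ p) := by ring
  have hfin : c - S < c - S := by
    calc c - S = Rp p * ((∑ i ∈ Finset.range p, c ^ i * S ^ (p - 1 - i)) * (c - S)) := hkey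
      _ < Rp p * (((p:ℝ) * c ^ (p-1)) * (c - S)) :=
          mul_lt_mul_of_pos_left (mul_lt_mul_of_pos_right hQlt hcS) hRpos
      _ = (Rp p * ((p:ℝ) * c ^ (p-1))) * (c - S) := by ring
      _ = 1 * (c - S) := by rw [Rp_pc_pow hp]
      _ = c - S := one_mul _
  exact lt_irrefl _ hfin

end Final
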